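/- Let ε ∈ (0,1), δ > 0, and set a := −1+ε, b := −1−δ. Consider the 3×3 symmetric matrix J = [[−1, a, b], [a, −1, a], [b, a, −1]]. Then: (a) the vector (1, 0, −1) is an eigenvector of J with eigenvalue δ > 0; (b) the other two eigenvalues of J are λ± = −1 + (b ± √(b² + 8a²))/2, i.e. the characteristic polynomial of J factors as (X − δ)(X − λ₊)(X − λ₋); (c) λ₊ < 0 and λ₋ < 0. Hence J has exactly one strictly positive eigenvalue and two strictly negative eigenvalues, so the corresponding equilibrium of the CSTLN is a hyperbolic saddle point. -/
import Mathlib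


open Matrix Polynomial

/-- For `ε ∈ (0,1)`, `δ > 0`, `a = −1+ε`, `b = −1−δ`, the matrix
`J = [[−1,a,b],[a,−1,a],[b,a,−1]]` has eigenvector `(1,0,−1)` with eigenvalue
`δ > 0`, its characteristic polynomial factors as `(X−δ)(X−λ₊)(X−λ₋)` with
`λ± = −1 + (b ± √(b²+8a²))/2`, and `λ₊ < 0`, `λ₋ < 0`. -/
theorem triple_support_jacobian_saddle (ε δ : ℝ) (hε : 0 < ε) (hε1 : ε < 1)
    (hδ : 0 < δ) (a b : ℝ) (ha : a = -1 + ε) (hb : b = -1 - δ)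
    (J : Matrix (Fin 3) (Fin 3) ℝ)
    (hJ : J = !![-1, a, b; a, -1, a; b, a, -1])
    (lp lm : ℝ)
    (hlp : lp = -1 + (b + Real.sqrt (b ^ 2 + 8 * a ^ 2)) / 2)
    (hlm : lm = -1 + (b - Real.sqrt (b ^ 2 + 8 * a ^ 2)) / 2) :
    -- (a) (1,0,−1) is an eigenvector with eigenvalue δ > 0
    (J.mulVec ![1, 0, -1] = δ • ![(1 : ℝ), 0, -1] ∧ 0 < δ) ∧
    -- (b) the characteristic polynomial factors accordingly
    (J.charpoly = (X - C δ) * (X - C lp) * (X - C lm)) ∧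
    -- (c) the other two eigenvalues are strictly negative
    (lp < 0 ∧ lm < 0) := by
  set s := Real.sqrt (b ^ 2 + 8 * a ^ 2) with hs
  have hsnn : 0 ≤ s := Real.sqrt_nonneg _
  have hs2 : s ^ 2 = b ^ 2 + 8 * a ^ 2 := Real.sq_sqrt (by positivity)
  refine ⟨⟨?_, hδ⟩, ?_, ?_, ?_⟩
  · funext i
    fin_cases i <;>
      simp [hJ, Matrix.mulVec, dotProduct, Fin.sum_univ_three, hb] <;> ring
  · have e1 : δ + lp + lm = -3 := by rw [hlp, hlm, hb]; ring
    have e2 : δ * lp + δ * lm + lp * lm = δ * (b - 2) + 1 - b - 2 * a ^ 2 := by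
      rw [hlp, hlm]; linear_combination (-(1:ℝ)/4) * hs2
    have e3 : δ * (lp * lm) = δ * (1 - b - 2 * a ^ 2) := by
      rw [hlp, hlm]; linear_combination (-δ/4) * hs2
    have expand : (X - C δ) * (X - C lp) * (X - C lm)
        = X ^ 3 - C (δ + lp + lm) * X ^ 2 + C (δ * lp + δ * lm + lp * lm) * X
          - C (δ * (lp * lm)) := by
      simp only [C_add, C_mul]; ring
    rw [expand, e1, e2, e3, Matrix.charpoly, Matrix.det_fin_three]
    simp [charmatrix_apply_eq, charmatrix_apply_ne, hJ, hb]
    ring_nf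
    simp [map_ofNat]
  · have h1 : s < 3 + δ := by
      nlinarith [sq_nonneg (s - (3+δ))]
    rw [hlp, hb]; linarith
  · have : b - s ≤ b := by linarith
    rw [hlm, hb]; linarith
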